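/- Let G be a finite simple graph on vertex set V with at least one edge, and let V_i, V_j ⊆ V be disjoint subsets, each of positive volume, such that no edge of G joins a vertex of V_i to a vertex of V_j. Then Δ_{(i,j)} = D_{V_i} + D_{V_j} − D_{V_i ∪ V_j} ≥ 0. -/

import Mathlib

open Finset Real

variable {V : Type*}

/-- Volume of a vertex subset: the sum of the degrees of its vertices. -/
noncomputable def gvol [Fintype V] (G : SimpleGraph V) [DecidableRel G.Adj] (S : Finset V) : ℕ :=
  ∑ v ∈ S, G.degree v

/-- Number of edges of `G` with exactly one endpoint in `S` (each such edge has a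
unique orientation going from inside `S` to outside `S`). -/
def cutEdges [Fintype V] [DecidableEq V] (G : SimpleGraph V) [DecidableRel G.Adj]
    (S : Finset V) : ℕ :=
  (Finset.univ.filter (fun p : V × V => G.Adj p.1 p.2 ∧ p.1 ∈ S ∧ p.2 ∉ S)).card

/-- Decoding-information contribution `D_S` of a vertex set `S`. -/
noncomputable def Dterm [Fintype V] [DecidableEq V] (G : SimpleGraph V) [DecidableRel G.Adj]
    (S : Finset V) : ℝ :=
  -(((gvol G S : ℝ) - (cutEdges G S : ℝ)) / (gvol G Finset.univ : ℝ)) *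
    Real.logb 2 ((gvol G S : ℝ) / (gvol G Finset.univ : ℝ))

lemma gvol_eq_card [Fintype V] [DecidableEq V] (G : SimpleGraph V) [DecidableRel G.Adj]
    (S : Finset V) :
    gvol G S = (Finset.univ.filter (fun p : V × V => G.Adj p.1 p.2 ∧ p.1 ∈ S)).card := by
  rw [Finset.card_filter, Fintype.sum_prod_type]
  unfold gvol
  have h : ∀ x : V, (∑ y : V, if G.Adj x y ∧ x ∈ S then (1:ℕ) else 0)
      = if x ∈ S then G.degree x else 0 := by
    intro x
    by_cases hx : x ∈ S
    · rw [if_pos hx, SimpleGraph.degree, SimpleGraph.neighborFinset_eq_filter,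
        Finset.card_filter]
      simp [hx]
    · simp [hx]
  simp only [h]
  rw [Finset.sum_ite_mem, Finset.univ_inter]

lemma cut_le_gvol [Fintype V] [DecidableEq V] (G : SimpleGraph V) [DecidableRel G.Adj]
    (S : Finset V) : cutEdges G S ≤ gvol G S := by
  rw [gvol_eq_card]
  apply Finset.card_le_card
  intro p hp
  simp only [Finset.mem_filter] at *
  tauto

lemma cut_union_eq [Fintype V] [DecidableEq V] (G : SimpleGraph V) [DecidableRel G.Adj]
    (Vi Vj : Finset V) (hdisj : Disjoint Vi Vj)
    (hno : ∀ u ∈ Vi, ∀ v ∈ Vj, ¬ G.Adj u v) :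
    cutEdges G (Vi ∪ Vj) = cutEdges G Vi + cutEdges G Vj := by
  unfold cutEdges
  have h1 : (Finset.univ.filter (fun p : V × V => G.Adj p.1 p.2 ∧ p.1 ∈ Vi ∪ Vj ∧ p.2 ∉ Vi ∪ Vj))
      = (Finset.univ.filter (fun p : V × V => G.Adj p.1 p.2 ∧ p.1 ∈ Vi ∧ p.2 ∉ Vi)) ∪
        (Finset.univ.filter (fun p : V × V => G.Adj p.1 p.2 ∧ p.1 ∈ Vj ∧ p.2 ∉ Vj)) := by
    ext p
    simp only [Finset.mem_filter, Finset.mem_union, Finset.mem_univ, true_and]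
    constructor
    · rintro ⟨ha, h1 | h1, h2⟩
      · exact Or.inl ⟨ha, h1, fun h => h2 (Or.inl h)⟩
      · exact Or.inr ⟨ha, h1, fun h => h2 (Or.inr h)⟩
    · rintro (⟨ha, h1, h2⟩ | ⟨ha, h1, h2⟩)
      · refine ⟨ha, Or.inl h1, ?_⟩
        rintro (h | h)
        · exact h2 h
        · exact hno _ h1 _ h ha
      · refine ⟨ha, Or.inr h1, ?_⟩
        rintro (h | h)
        · exact hno _ h _ h1 (G.adj_symm ha)
        · exact h2 h
  rw [h1, Finset.card_union_of_disjoint]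
  rw [Finset.disjoint_left]
  intro p hp hq
  simp only [Finset.mem_filter] at hp hq
  exact Finset.disjoint_left.mp hdisj hp.2.2.1 hq.2.2.1

lemma gvol_union_eq [Fintype V] (G : SimpleGraph V) [DecidableRel G.Adj] [DecidableEq V]
    (Vi Vj : Finset V) (hdisj : Disjoint Vi Vj) :
    gvol G (Vi ∪ Vj) = gvol G Vi + gvol G Vj :=
  Finset.sum_union hdisj

lemma gvol_le_total [Fintype V] (G : SimpleGraph V) [DecidableRel G.Adj]
    (S : Finset V) : gvol G S ≤ gvol G Finset.univ :=
  Finset.sum_le_sum_of_subset (Finset.subset_univ S)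

lemma gvol_univ_pos [Fintype V] [DecidableEq V] (G : SimpleGraph V) [DecidableRel G.Adj]
    (hE : G.edgeFinset.Nonempty) : 0 < gvol G Finset.univ := by
  unfold gvol
  rw [SimpleGraph.sum_degrees_eq_twice_card_edges]
  have := Finset.card_pos.mpr hE
  omega

/-- Theorem 1 of the paper: if no edge joins the disjoint sets `Vi` and `Vj`, then
`Δ_{(i,j)} = D_{Vi} + D_{Vj} − D_{Vi ∪ Vj} ≥ 0`. -/
theorem delta_nonneg_of_no_edge [Fintype V] [DecidableEq V]
    (G : SimpleGraph V) [DecidableRel G.Adj]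
    (hE : G.edgeFinset.Nonempty)
    (Vi Vj : Finset V) (hdisj : Disjoint Vi Vj)
    (hvi : 0 < gvol G Vi) (hvj : 0 < gvol G Vj)
    (hno : ∀ u ∈ Vi, ∀ v ∈ Vj, ¬ G.Adj u v) :
    0 ≤ Dterm G Vi + Dterm G Vj - Dterm G (Vi ∪ Vj) := by
  have hM : (0:ℝ) < (gvol G Finset.univ : ℝ) := by
    exact_mod_cast gvol_univ_pos G hE
  set M : ℝ := (gvol G Finset.univ : ℝ)
  set a : ℝ := (gvol G Vi : ℝ)
  set b : ℝ := (gvol G Vj : ℝ)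
  set ga : ℝ := (cutEdges G Vi : ℝ)
  set gb : ℝ := (cutEdges G Vj : ℝ)
  have ha : (0:ℝ) < a := Nat.cast_pos.mpr hvi
  have hb : (0:ℝ) < b := Nat.cast_pos.mpr hvj
  have hga : ga ≤ a := Nat.cast_le.mpr (cut_le_gvol G Vi)
  have hgb : gb ≤ b := Nat.cast_le.mpr (cut_le_gvol G Vj)
  have hab : a + b ≤ M := by
    have := gvol_le_total G (Vi ∪ Vj)
    have h2 := gvol_union_eq G Vi Vj hdisj
    have h3 : gvol G Vi + gvol G Vj ≤ gvol G Finset.univ := h2 ▸ this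
    calc a + b = ((gvol G Vi + gvol G Vj : ℕ) : ℝ) := by push_cast; rfl
    _ ≤ M := Nat.cast_le.mpr h3
  have key : Dterm G Vi + Dterm G Vj - Dterm G (Vi ∪ Vj)
      = ((a - ga) / M) * (Real.logb 2 ((a + b) / M) - Real.logb 2 (a / M))
      + ((b - gb) / M) * (Real.logb 2 ((a + b) / M) - Real.logb 2 (b / M)) := by
    unfold Dterm
    rw [gvol_union_eq G Vi Vj hdisj, cut_union_eq G Vi Vj hdisj hno]
    push_cast
    ring
  rw [key]
  have hmono : ∀ x : ℝ, 0 < x → x ≤ a + b →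
      Real.logb 2 (x / M) ≤ Real.logb 2 ((a + b) / M) := by
    intro x hx hxab
    apply Real.logb_le_logb_of_le one_lt_two (by positivity)
    exact div_le_div_of_nonneg_right hxab hM.le
  have t1 : 0 ≤ ((a - ga) / M) * (Real.logb 2 ((a + b) / M) - Real.logb 2 (a / M)) := by
    apply mul_nonneg
    · apply div_nonneg (by linarith) hM.le
    · have := hmono a ha (by linarith)
      linarith
  have t2 : 0 ≤ ((b - gb) / M) * (Real.logb 2 ((a + b) / M) - Real.logb 2 (b / M)) := by
    apply mul_nonneg
    · apply div_nonneg (by linarith) hM.le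
    · have := hmono b hb (by linarith)
      linarith
  linarith
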